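/- Let G be a finite group that is homogeneous of rank n, and suppose there exists a surjective homomorphism f : G → H onto a finite group H. Then for any s = (s₁,…,sₙ) ∈ Γ_n(H) and any t = (t₁,…,tₙ) ∈ Γ_n(G), there exists a surjective homomorphism h : G → H such that h(tᵢ) = sᵢ for all i ≤ n. -/
import Mathlib

/-- `(x₁,…,xₙ)` is a generating sequence of `G`: the entries generate `G`. -/
def IsGenSeq {G : Type*} [Group G] {n : ℕ} (x : Fin n → G) : Prop :=
  Subgroup.closure (Set.range x) = ⊤

/-- `r(G)`: the least `n` such that `G` has a generating sequence of length `n`. -/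
noncomputable def grank (G : Type*) [Group G] : ℕ :=
  sInf {n : ℕ | ∃ x : Fin n → G, IsGenSeq x}

/-- `G` is homogeneous of rank `n`: `Γ_n(G)` is nonempty and `Aut(G)` acts
transitively on it. -/
def IsHomogeneous (G : Type*) [Group G] (n : ℕ) : Prop :=
  (∃ x : Fin n → G, IsGenSeq x) ∧
    ∀ x y : Fin n → G, IsGenSeq x → IsGenSeq y → ∃ f : G ≃* G, ∀ i, f (x i) = y i

section Gaschuetz

open Subgroup Pointwise

universe u

variable {n : ℕ}

private noncomputable def fibCard {K : Type u} [Group K] (M : Subgroup K) (w : Fin n → K)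
    (V : Subgroup K) : ℕ :=
  Nat.card {v : Fin n → K // (∀ i, (w i)⁻¹ * v i ∈ M) ∧ Subgroup.closure (Set.range v) = V}

private lemma fibCard_eq_zero {K : Type u} [Group K] {M : Subgroup K} {w : Fin n → K}
    {V : Subgroup K} (hw : Subgroup.closure (Set.range w) ⊔ M = ⊤) (hV : V ⊔ M ≠ ⊤) :
    fibCard M w V = 0 := by
  rw [fibCard, Nat.card_eq_zero]
  left
  constructor
  rintro ⟨v, h1, h2⟩
  apply hV
  rw [eq_top_iff, ← hw]
  refine sup_le ?_ le_sup_right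
  rw [Subgroup.closure_le]
  rintro _ ⟨i, rfl⟩
  have hv : v i ∈ V := h2 ▸ Subgroup.subset_closure ⟨i, rfl⟩
  have hrw : w i = v i * ((w i)⁻¹ * v i)⁻¹ := by group
  rw [hrw]
  exact mul_mem ((le_sup_left : V ≤ V ⊔ M) hv)
    ((le_sup_right : M ≤ V ⊔ M) (inv_mem (h1 i)))

private lemma card_coset_tuples {K : Type u} [Group K] [Finite K] (M : Subgroup K)
    (w : Fin n → K) :
    Nat.card {v : Fin n → K // ∀ i, (w i)⁻¹ * v i ∈ M} = Nat.card M ^ n := by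
  have e : {v : Fin n → K // ∀ i, (w i)⁻¹ * v i ∈ M} ≃ (Fin n → M) :=
    { toFun := fun v i => ⟨(w i)⁻¹ * v.1 i, v.2 i⟩
      invFun := fun m => ⟨fun i => w i * (m i : K), fun i => by
        simp⟩
      left_inv := fun v => Subtype.ext (funext fun i => by simp)
      right_inv := fun m => funext fun i => Subtype.ext (by simp) }
  rw [Nat.card_congr e, Nat.card_fun]
  congr 1
  simp

private lemma nat_card_eq_sum_fibers {α ι : Type*} [Finite α] [Fintype ι] (f : α → ι) :
    Nat.card α = ∑ i, Nat.card {x : α // f x = i} := by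
  classical
  cases nonempty_fintype α
  simp_rw [Nat.card_eq_fintype_card]
  rw [← Fintype.card_sigma]
  exact Fintype.card_congr (Equiv.sigmaFiberEquiv f).symm

private lemma map_closure_range_coe {K : Type u} [Group K] (V : Subgroup K)
    (u : Fin n → V) :
    Subgroup.map V.subtype (Subgroup.closure (Set.range u))
      = Subgroup.closure (Set.range fun i => (u i : K)) := by
  rw [MonoidHom.map_closure]
  congr 1
  rw [← Set.range_comp]
  rfl

private lemma fibCard_transfer {K : Type u} [Group K] (M : Subgroup K) (w : Fin n → K)
    (V : Subgroup K) (u : Fin n → V) (hu : ∀ i, (w i)⁻¹ * (u i : K) ∈ M) :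
    fibCard M w V = fibCard (M.subgroupOf V) u ⊤ := by
  have key : ∀ (v : Fin n → K), (∀ i, (w i)⁻¹ * v i ∈ M) →
      Subgroup.closure (Set.range v) = V → ∀ i, v i ∈ V :=
    fun v _ h2 i => h2 ▸ Subgroup.subset_closure ⟨i, rfl⟩
  refine Nat.card_congr
    { toFun := fun v => ⟨fun i => (⟨v.1 i, key v.1 v.2.1 v.2.2 i⟩ : V), ?_, ?_⟩
      invFun := fun v => ⟨fun i => (v.1 i : K), ?_, ?_⟩
      left_inv := fun v => Subtype.ext (funext fun i => rfl)
      right_inv := fun v => Subtype.ext (funext fun i => Subtype.ext rfl) }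
  · -- cosets in V
    intro i
    rw [Subgroup.mem_subgroupOf]
    have h1 := v.2.1 i
    have hrw : ((((u i)⁻¹ * ⟨v.1 i, key v.1 v.2.1 v.2.2 i⟩ : V)) : K)
        = ((w i)⁻¹ * (u i : K))⁻¹ * ((w i)⁻¹ * v.1 i) := by
      push_cast; group
    rw [hrw]
    exact mul_mem (inv_mem (hu i)) h1
  · -- closure = ⊤ in V
    apply Subgroup.map_injective V.subtype_injective
    rw [map_closure_range_coe]
    have : (fun i => ((⟨v.1 i, key v.1 v.2.1 v.2.2 i⟩ : V) : K)) = v.1 := rfl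
    rw [this, v.2.2, ← MonoidHom.range_eq_map, Subgroup.range_subtype]
  · -- cosets in K
    intro i
    have h1 := v.2.1 i
    rw [Subgroup.mem_subgroupOf] at h1
    have hrw : (w i)⁻¹ * (v.1 i : K)
        = ((w i)⁻¹ * (u i : K)) * (((u i)⁻¹ * v.1 i : V) : K) := by
      push_cast; group
    rw [hrw]
    exact mul_mem (hu i) h1
  · -- closure = V in K
    have := congrArg (Subgroup.map V.subtype) v.2.2
    rw [map_closure_range_coe, ← MonoidHom.range_eq_map, Subgroup.range_subtype] at this
    exact this

private lemma sup_subgroupOf_top {K : Type u} [Group K] (M : Subgroup K) [M.Normal]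
    (V : Subgroup K) (w : Fin n → K) (u : Fin n → V)
    (hu : ∀ i, (w i)⁻¹ * (u i : K) ∈ M)
    (hw : Subgroup.closure (Set.range w) ⊔ M = ⊤) :
    Subgroup.closure (Set.range u) ⊔ M.subgroupOf V = ⊤ := by
  set C := Subgroup.closure (Set.range fun i => (u i : K)) with hC
  have hCV : C ≤ V := by
    rw [hC, Subgroup.closure_le]; rintro _ ⟨i, rfl⟩; exact (u i).2
  have hCM : C ⊔ M = ⊤ := by
    rw [eq_top_iff, ← hw]
    refine sup_le ?_ le_sup_right
    rw [Subgroup.closure_le]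
    rintro _ ⟨i, rfl⟩
    have hrw : w i = (u i : K) * ((w i)⁻¹ * (u i : K))⁻¹ := by group
    rw [hrw]
    exact mul_mem ((le_sup_left : C ≤ C ⊔ M) (Subgroup.subset_closure ⟨i, rfl⟩))
      ((le_sup_right : M ≤ C ⊔ M) (inv_mem (hu i)))
  rw [eq_top_iff]
  rintro ⟨x, hxV⟩ -
  have hx : x ∈ (C : Set K) * (M : Set K) := by
    rw [← Subgroup.mul_normal, hCM]; trivial
  obtain ⟨c, hc, m, hm, rfl⟩ := hx
  have hmV : m ∈ V := by
    have hrw : m = c⁻¹ * (c * m) := by group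
    rw [hrw]; exact mul_mem (inv_mem (hCV hc)) hxV
  have hc' : c ∈ C := hc
  rw [hC, ← map_closure_range_coe] at hc'
  obtain ⟨y, hy, hyc⟩ := hc'
  have heq : (⟨c * m, hxV⟩ : V) = y * ⟨m, hmV⟩ := Subtype.ext (show c * m = (y : K) * m by rw [← hyc]; rfl)
  rw [heq]
  exact mul_mem
    ((le_sup_left : _ ≤ _ ⊔ M.subgroupOf V) hy)
    ((le_sup_right : M.subgroupOf V ≤ _) (Subgroup.mem_subgroupOf.2 hm))

private lemma fibCard_top_eq : ∀ (c : ℕ) (K : Type u) [Group K] [Finite K],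
    Nat.card K ≤ c → ∀ (M : Subgroup K) [M.Normal] (w w' : Fin n → K),
    Subgroup.closure (Set.range w) ⊔ M = ⊤ → Subgroup.closure (Set.range w') ⊔ M = ⊤ →
    fibCard M w ⊤ = fibCard M w' ⊤ := by
  intro c
  induction c with
  | zero =>
    intro K _ _ hc
    exact absurd hc (by have := Nat.card_pos (α := K); omega)
  | succ c ih =>
    intro K _ _ hc M _ w w' hw hw'
    classical
    haveI : Finite (Subgroup K) :=
      Finite.of_injective (fun H : Subgroup K => (H : Set K)) SetLike.coe_injective
    letI : Fintype (Subgroup K) := Fintype.ofFinite _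
    -- equality of the non-top fibers
    have hVfib : ∀ V : Subgroup K, V ≠ ⊤ → fibCard M w V = fibCard M w' V := by
      intro V hV
      by_cases hVM : V ⊔ M = ⊤
      · have pick : ∀ (z : Fin n → K), Subgroup.closure (Set.range z) ⊔ M = ⊤ →
            ∃ uu : Fin n → V, ∀ i, (z i)⁻¹ * (uu i : K) ∈ M := by
          intro z hz
          have h : ∀ i, ∃ x : V, (z i)⁻¹ * (x : K) ∈ M := by
            intro i
            have hzi : z i ∈ (V : Set K) * (M : Set K) := by
              rw [← Subgroup.mul_normal, hVM]; trivial
            obtain ⟨a, ha, m, hm, hzi⟩ := hzi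
            refine ⟨⟨a, ha⟩, ?_⟩
            have hrw : (z i)⁻¹ * a = m⁻¹ := by rw [← hzi]; group
            rw [hrw]; exact inv_mem hm
          exact ⟨fun i => (h i).choose, fun i => (h i).choose_spec⟩
        obtain ⟨u, hu⟩ := pick w hw
        obtain ⟨u', hu'⟩ := pick w' hw'
        rw [fibCard_transfer M w V u hu, fibCard_transfer M w' V u' hu']
        have hcard : Nat.card V ≤ c := by
          obtain ⟨x, hx⟩ : ∃ x, x ∉ V := by
            by_contra h
            push_neg at h
            exact hV ((Subgroup.eq_top_iff' V).2 h)
          have h3 : Nat.card {x : K // x ∈ V} < Nat.card K :=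
            Finite.card_subtype_lt hx
          have h4 : Nat.card V = Nat.card {x : K // x ∈ V} := rfl
          omega
        exact ih V hcard (M.subgroupOf V) u u'
          (sup_subgroupOf_top M V w u hu hw) (sup_subgroupOf_top M V w' u' hu' hw')
      · rw [fibCard_eq_zero hw hVM, fibCard_eq_zero hw' hVM]
    -- sum of all fibers equals |M|^n
    have hsum : ∀ z : Fin n → K,
        (∑ V : Subgroup K, fibCard M z V) = Nat.card M ^ n := by
      intro z
      rw [← card_coset_tuples M z,
        nat_card_eq_sum_fibers
          (fun v : {v : Fin n → K // ∀ i, (z i)⁻¹ * v i ∈ M} =>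
            Subgroup.closure (Set.range v.1))]
      refine Finset.sum_congr rfl fun V _ => (Nat.card_congr ?_).symm
      exact
        { toFun := fun x => ⟨x.1.1, x.1.2, x.2⟩
          invFun := fun x => ⟨⟨x.1, x.2.1⟩, x.2.2⟩
          left_inv := fun x => rfl
          right_inv := fun x => rfl }
    have h1 : (∑ V : Subgroup K, fibCard M w V) = ∑ V : Subgroup K, fibCard M w' V := by
      rw [hsum w, hsum w']
    rw [← Finset.add_sum_erase _ (fibCard M w) (Finset.mem_univ ⊤),
      ← Finset.add_sum_erase _ (fibCard M w') (Finset.mem_univ ⊤)] at h1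
    have h2 : (∑ V ∈ Finset.univ.erase ⊤, fibCard M w V)
        = ∑ V ∈ Finset.univ.erase ⊤, fibCard M w' V :=
      Finset.sum_congr rfl fun V hV => hVfib V (Finset.ne_of_mem_erase hV)
    rw [h2] at h1
    exact Nat.add_right_cancel h1

/-- Gaschütz's lemma. -/
private lemma gaschuetz {K : Type u} [Group K] [Finite K] (M : Subgroup K) [M.Normal]
    (t w : Fin n → K) (ht : Subgroup.closure (Set.range t) = ⊤)
    (hw : Subgroup.closure (Set.range w) ⊔ M = ⊤) :
    ∃ v : Fin n → K, Subgroup.closure (Set.range v) = ⊤ ∧ ∀ i, (w i)⁻¹ * v i ∈ M := by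
  have h1 : fibCard M t ⊤ = fibCard M w ⊤ :=
    fibCard_top_eq (Nat.card K) K le_rfl M t w (by simp [ht]) hw
  have h2 : 0 < fibCard M t ⊤ := by
    rw [fibCard]
    have : Nonempty {v : Fin n → K //
        (∀ i, (t i)⁻¹ * v i ∈ M) ∧ Subgroup.closure (Set.range v) = ⊤} :=
      ⟨⟨t, fun i => by simpa using one_mem M, ht⟩⟩
    exact Nat.card_pos
  rw [h1, fibCard] at h2
  obtain ⟨⟨v, hv1, hv2⟩⟩ := (Nat.card_pos_iff.mp h2).1
  exact ⟨v, hv2, hv1⟩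

end Gaschuetz

/-- For a homogeneous group `G` of rank `n` surjecting onto `H`, any generating
sequence of `G` can be mapped to any generating sequence of `H` by some surjection. -/
theorem homogeneous_surjection_on_genSeqs (G H : Type*) [Group G] [Finite G]
    [Group H] [Finite H] (n : ℕ) (hG : IsHomogeneous G n)
    (f : G →* H) (hf : Function.Surjective f)
    (s : Fin n → H) (hs : IsGenSeq s) (t : Fin n → G) (ht : IsGenSeq t) :
    ∃ h : G →* H, Function.Surjective h ∧ ∀ i, h (t i) = s i := by
  choose w hwf using fun i => hf (s i)
  have hw : Subgroup.closure (Set.range w) ⊔ f.ker = ⊤ := by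
    rw [eq_top_iff]
    intro x _
    have hrange : Set.range s = f '' Set.range w := by
      rw [← Set.range_comp]
      exact congrArg Set.range (funext fun i => (hwf i).symm)
    have hfx : f x ∈ Subgroup.map f (Subgroup.closure (Set.range w)) := by
      rw [MonoidHom.map_closure, ← hrange, hs]
      trivial
    obtain ⟨y, hy, hyx⟩ := hfx
    have hk : y⁻¹ * x ∈ f.ker := by
      rw [MonoidHom.mem_ker, map_mul, map_inv, hyx, inv_mul_cancel]
    have hrw : x = y * (y⁻¹ * x) := by group
    rw [hrw]
    exact mul_mem ((le_sup_left : _ ≤ _ ⊔ f.ker) hy) ((le_sup_right : f.ker ≤ _ ⊔ f.ker) hk)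
  obtain ⟨v, hv, hvw⟩ := gaschuetz f.ker t w ht hw
  obtain ⟨α, hα⟩ := hG.2 t v ht hv
  refine ⟨f.comp α.toMonoidHom, hf.comp α.surjective, fun i => ?_⟩
  have hfv : f (v i) = s i := by
    have h1 : f ((w i)⁻¹ * v i) = 1 := MonoidHom.mem_ker.mp (hvw i)
    rw [map_mul, map_inv, hwf i] at h1
    calc f (v i) = s i * ((s i)⁻¹ * f (v i)) := by group
    _ = s i * 1 := by rw [h1]
    _ = s i := mul_one _
  simpa [hα i] using hfv
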